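/- Let k be the fraction field of a Dedekind domain R of characteristic zero with perfect residue fields at all nonzero primes, and let t_1 ∈ P^1(k̃), where k̃ is a fixed algebraic closure of k. Then there exists a finite set S_1 of primes of k, depending only on t_1, with the following property: for every prime p of k not in S_1 and every t_0 ∈ P^1(k) \ {t_1} such that t_0 and t_1 meet modulo p, there exists a unique prime p' of k(t_1) lying over p with residue degree f_{p'|p} = 1 at which t_0 and t_1 meet. -/

import Mathlib

/-!
Formalization of results of König, Legrand, Neftin,
"On the local behaviour of specializations of function field extensions".

Since Mathlib does not yet have the theory of branch points, decomposition/inertia groups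
at branch points, specializations and completions of function field extensions, we package
a `k`-regular Galois extension `E/k(T)` *together with* this associated data in a structure
`RegularGaloisModel`; each piece of data is documented by the object of the paper it
represents.  Notions that are expressible directly (meeting modulo a prime, intersection
multiplicities, residue degree one, decomposition and inertia groups of a finite Galois
extension of `k` at a prime of `k`, completions, ...) are defined concretely.
-/

open IsDedekindDomain Polynomial
open scoped Multiplicative TensorProduct

noncomputable section

variable (R k : Type) [CommRing R] [IsDedekindDomain R] [Field k] [CharZero k]
  [Algebra R k] [IsFractionRing R k]
/-- The hypothesis that all residue fields of `R` at nonzero primes are perfect. -/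
def PerfectResidueFields : Prop :=
  ∀ p : HeightOneSpectrum R,
    PerfectField (IsLocalRing.ResidueField (Localization.AtPrime p.asIdeal))

/-- `P^1(k)`: the projective line over `k`, with `none` playing the role of `∞`. -/
abbrev P1 (k : Type) := Option k

/-- The integral closure of `R` in a fixed algebraic closure of `k`. -/
abbrev IntClosure : Type := integralClosure R (AlgebraicClosure k)

/-- The natural inclusion `P^1(k) → P^1(k̃)`. -/
def emb : P1 k → P1 (AlgebraicClosure k) := Option.map (algebraMap k (AlgebraicClosure k))

open Classical in
/-- The map `t ↦ 1/t` on `P^1`, with the conventions `1/∞ = 0` and `1/0 = ∞`. -/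
def pinv {F : Type} [Field F] : P1 F → P1 F
  | none => some 0
  | some x => if x = 0 then none else some x⁻¹

/-- The subfield `k(t)` of the algebraic closure generated by a point `t ∈ P^1(k̃)`
(equal to `k` itself when `t = ∞`). -/
def kfield : P1 (AlgebraicClosure k) → IntermediateField k (AlgebraicClosure k)
  | none => ⊥
  | some x => IntermediateField.adjoin k {x}

/-- The minimal polynomial `m_t` of `t ∈ P^1(k̃)` over `k`, set equal to `1` when `t = ∞`. -/
def minpolyOf : P1 (AlgebraicClosure k) → Polynomial k
  | none => 1
  | some x => minpoly k x

/-- A prime ideal `Q` of the integral closure of `R` in `k̃` lies over the prime `p` of `k`. -/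
def LiesOver (p : HeightOneSpectrum R) (Q : Ideal (IntClosure R k)) : Prop :=
  ∀ r : R, algebraMap R (IntClosure R k) r ∈ Q ↔ r ∈ p.asIdeal

/-- `v_Q(x) ≥ 0` : `x` can be written as `a/b` with `a, b` integral over `R` and `b ∉ Q`. -/
def VNonneg (Q : Ideal (IntClosure R k)) (x : AlgebraicClosure k) : Prop :=
  ∃ a b : IntClosure R k, b ∉ Q ∧ (b : AlgebraicClosure k) * x = (a : AlgebraicClosure k)

/-- `v_Q(x) > 0` : `x` can be written as `a/b` with `a, b` integral over `R`, `a ∈ Q`,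
`b ∉ Q`. -/
def VPos (Q : Ideal (IntClosure R k)) (x : AlgebraicClosure k) : Prop :=
  ∃ a b : IntClosure R k, a ∈ Q ∧ b ∉ Q ∧ (b : AlgebraicClosure k) * x = (a : AlgebraicClosure k)

/-- The "finite part" of the meeting condition: `v_Q(t₀) ≥ 0`, `v_Q(t₁) ≥ 0` and
`v_Q(t₀ - t₁) > 0` (it fails by convention if `t₀ = ∞` or `t₁ = ∞`). -/
def FinMeet (Q : Ideal (IntClosure R k)) :
    P1 (AlgebraicClosure k) → P1 (AlgebraicClosure k) → Prop
  | some x, some y => VNonneg R k Q x ∧ VNonneg R k Q y ∧ VPos R k Q (x - y)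
  | _, _ => False

/-- `t₀` and `t₁` meet at the prime `Q` (of the integral closure of `R` in `k̃`):
either `v_Q(t₀) ≥ 0`, `v_Q(t₁) ≥ 0`, `v_Q(t₀ - t₁) > 0`, or the same for `1/t₀, 1/t₁`. -/
def MeetsAt (Q : Ideal (IntClosure R k)) (t₀ t₁ : P1 (AlgebraicClosure k)) : Prop :=
  FinMeet R k Q t₀ t₁ ∨ FinMeet R k Q (pinv t₀) (pinv t₁)

/-- Two distinct points of `P^1(k̃)` meet modulo a prime `p` of `k` if they meet at some
prime of the integral closure of `R` in `k̃` lying over `p`. -/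
def MeetsModulo (p : HeightOneSpectrum R) (t₀ t₁ : P1 (AlgebraicClosure k)) : Prop :=
  t₀ ≠ t₁ ∧ ∃ Q : Ideal (IntClosure R k), Q.IsPrime ∧ LiesOver R k p Q ∧ MeetsAt R k Q t₀ t₁

/-- The restriction to `k(t₁)` of the prime `Q` of the integral closure of `R` in `k̃` has
residue degree 1 over `p` : every integral element of `k(t₁)` is congruent mod `Q` to an
element of `R`. -/
def ResidueDegreeOne (t₁ : P1 (AlgebraicClosure k)) (Q : Ideal (IntClosure R k)) : Prop :=
  ∀ x : IntClosure R k, (x : AlgebraicClosure k) ∈ kfield k t₁ →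
    ∃ r : R, x - algebraMap R (IntClosure R k) r ∈ Q

/-- The intersection multiplicity `I_p(t₀, t₁)` equals `n` : it is `v_p(m_{t₁}(t₀))` if
`v_p(t₀) ≥ 0`, and `v_p(m_{1/t₁}(1/t₀))` if `v_p(t₀) ≤ 0`. -/
def IntersectionMultIs (p : HeightOneSpectrum R) (t₀ : P1 k) (t₁ : P1 (AlgebraicClosure k))
    (n : ℕ) : Prop :=
  match t₀ with
  | none => p.valuation k (Polynomial.eval (0 : k) (minpolyOf k (pinv t₁)))
      = (↑(Multiplicative.ofAdd (-(n : ℤ))) : WithZero (Multiplicative ℤ))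
  | some x =>
      (p.valuation k x ≤ 1 ∧ p.valuation k (Polynomial.eval x (minpolyOf k t₁))
        = (↑(Multiplicative.ofAdd (-(n : ℤ))) : WithZero (Multiplicative ℤ)))
      ∨ (1 ≤ p.valuation k x ∧ p.valuation k (Polynomial.eval x⁻¹ (minpolyOf k (pinv t₁)))
        = (↑(Multiplicative.ofAdd (-(n : ℤ))) : WithZero (Multiplicative ℤ)))

set_option linter.unusedSectionVars false
set_option linter.unusedVariables false
set_option maxHeartbeats 2000000

variable {R k}
variable {p : HeightOneSpectrum R} {Q : Ideal (IntClosure R k)}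

lemma coe_algebraMap_IC (r : R) :
    ((algebraMap R (IntClosure R k) r : IntClosure R k) : AlgebraicClosure k)
      = algebraMap R (AlgebraicClosure k) r := by
  rw [IsScalarTower.algebraMap_apply R (IntClosure R k) (AlgebraicClosure k) r]
  rfl

lemma one_not_mem (hQ : Q.IsPrime) : (1 : IntClosure R k) ∉ Q :=
  (Ideal.ne_top_iff_one Q).mp hQ.ne_top

lemma vnonneg_coe (hQ : Q.IsPrime) (x : IntClosure R k) : VNonneg R k Q ↑x :=
  ⟨x, 1, one_not_mem hQ, by simp⟩

lemma vnonneg_add (hQ : Q.IsPrime) {x y : AlgebraicClosure k}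
    (hx : VNonneg R k Q x) (hy : VNonneg R k Q y) : VNonneg R k Q (x + y) := by
  obtain ⟨a, b, hb, hab⟩ := hx
  obtain ⟨c, d, hd, hcd⟩ := hy
  refine ⟨a * d + c * b, b * d, fun h => ?_, by push_cast; linear_combination (d : AlgebraicClosure k) * hab + (b : AlgebraicClosure k) * hcd⟩
  rcases hQ.mem_or_mem h with h | h; exacts [hb h, hd h]

lemma vnonneg_mul (hQ : Q.IsPrime) {x y : AlgebraicClosure k}
    (hx : VNonneg R k Q x) (hy : VNonneg R k Q y) : VNonneg R k Q (x * y) := by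
  obtain ⟨a, b, hb, hab⟩ := hx
  obtain ⟨c, d, hd, hcd⟩ := hy
  refine ⟨a * c, b * d, fun h => ?_, by push_cast; linear_combination (↑d * y) * hab + (a : AlgebraicClosure k) * hcd⟩
  rcases hQ.mem_or_mem h with h | h; exacts [hb h, hd h]

lemma vnonneg_neg {x : AlgebraicClosure k} (hx : VNonneg R k Q x) : VNonneg R k Q (-x) := by
  obtain ⟨a, b, hb, hab⟩ := hx
  exact ⟨-a, b, hb, by push_cast; rw [mul_neg, hab]⟩

lemma vpos_add (hQ : Q.IsPrime) {x y : AlgebraicClosure k}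
    (hx : VPos R k Q x) (hy : VPos R k Q y) : VPos R k Q (x + y) := by
  obtain ⟨a, b, ha, hb, hab⟩ := hx
  obtain ⟨c, d, hc, hd, hcd⟩ := hy
  refine ⟨a * d + c * b, b * d, Q.add_mem (Q.mul_mem_right _ ha) (Q.mul_mem_right _ hc),
    fun h => ?_, by push_cast; linear_combination (d : AlgebraicClosure k) * hab + (b : AlgebraicClosure k) * hcd⟩
  rcases hQ.mem_or_mem h with h | h; exacts [hb h, hd h]

lemma vpos_neg {x : AlgebraicClosure k} (hx : VPos R k Q x) : VPos R k Q (-x) := by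
  obtain ⟨a, b, ha, hb, hab⟩ := hx
  exact ⟨-a, b, Q.neg_mem ha, hb, by push_cast; rw [mul_neg, hab]⟩

lemma vpos_mul_vnonneg (hQ : Q.IsPrime) {x y : AlgebraicClosure k}
    (hx : VPos R k Q x) (hy : VNonneg R k Q y) : VPos R k Q (x * y) := by
  obtain ⟨a, b, ha, hb, hab⟩ := hx
  obtain ⟨c, d, hd, hcd⟩ := hy
  refine ⟨a * c, b * d, Q.mul_mem_right _ ha, fun h => ?_,
    by push_cast; linear_combination (↑d * y) * hab + (a : AlgebraicClosure k) * hcd⟩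
  rcases hQ.mem_or_mem h with h | h; exacts [hb h, hd h]

lemma vpos_vnonneg {x : AlgebraicClosure k} (hx : VPos R k Q x) : VNonneg R k Q x := by
  obtain ⟨a, b, _, hb, hab⟩ := hx; exact ⟨a, b, hb, hab⟩

lemma vpos_coe_iff (hQ : Q.IsPrime) (x : IntClosure R k) : VPos R k Q ↑x ↔ x ∈ Q := by
  constructor
  · rintro ⟨a, b, ha, hb, hab⟩
    have : b * x = a := Subtype.coe_injective (by push_cast; exact hab)
    have : b * x ∈ Q := this ▸ ha
    rcases hQ.mem_or_mem this with h | h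
    · exact absurd h hb
    · exact h
  · intro h; exact ⟨x, 1, h, one_not_mem hQ, by simp⟩

lemma mem_of_liesOver (hpQ : LiesOver R k p Q) {r : R} (hr : r ∈ p.asIdeal) :
    algebraMap R (IntClosure R k) r ∈ Q := (hpQ r).mpr hr

lemma not_mem_of_liesOver (hpQ : LiesOver R k p Q) {r : R} (hr : r ∉ p.asIdeal) :
    algebraMap R (IntClosure R k) r ∉ Q := fun h => hr ((hpQ r).mp h)

lemma vpos_sub (hQ : Q.IsPrime) {x y : AlgebraicClosure k}
    (hx : VPos R k Q x) (hy : VPos R k Q y) : VPos R k Q (x - y) := by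
  rw [sub_eq_add_neg]; exact vpos_add hQ hx (vpos_neg hy)

lemma map_k_eq {c d : k} (h : c = d) :
    algebraMap k (AlgebraicClosure k) c = algebraMap k (AlgebraicClosure k) d := by rw [h]

lemma algebraMap_R_k_K (r : R) :
    algebraMap k (AlgebraicClosure k) (algebraMap R k r) = algebraMap R (AlgebraicClosure k) r :=
  (IsScalarTower.algebraMap_apply R k (AlgebraicClosure k) r).symm

lemma one_not_mem_p (p : HeightOneSpectrum R) : (1 : R) ∉ p.asIdeal :=
  fun h => p.isPrime.ne_top (Ideal.eq_top_of_isUnit_mem _ h isUnit_one)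

lemma dichotomy (p : HeightOneSpectrum R) (c : k) :
    (∃ τ σ : R, σ ∉ p.asIdeal ∧ algebraMap R k σ * c = algebraMap R k τ) ∨
    (∃ τ σ : R, τ ∈ p.asIdeal ∧ σ ∉ p.asIdeal ∧ algebraMap R k τ * c = algebraMap R k σ) := by
  by_cases hc : c = 0
  · exact Or.inl ⟨0, 1, one_not_mem_p p, by simp [hc]⟩
  -- transfer to the fraction field of R
  let F := FractionRing R
  let e : k ≃ₐ[R] F := IsLocalization.algEquiv (nonZeroDivisors R) k F
  set c' : F := e c with hc'
  have hcanc : ∀ r : R, e (algebraMap R k r) = algebraMap R F r := fun r => e.commutes r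
  suffices h : (∃ τ σ : R, σ ∉ p.asIdeal ∧ algebraMap R F σ * c' = algebraMap R F τ) ∨
      (∃ τ σ : R, τ ∈ p.asIdeal ∧ σ ∉ p.asIdeal ∧ algebraMap R F τ * c' = algebraMap R F σ) by
    rcases h with ⟨τ, σ, hσ, heq⟩ | ⟨τ, σ, hτ, hσ, heq⟩
    · refine Or.inl ⟨τ, σ, hσ, ?_⟩
      have := congrArg e.symm heq
      simp only [map_mul, ← hcanc, hc', e.symm_apply_apply] at this
      exact this
    · refine Or.inr ⟨τ, σ, hτ, hσ, ?_⟩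
      have := congrArg e.symm heq
      simp only [map_mul, ← hcanc, hc', e.symm_apply_apply] at this
      exact this
  have hc0' : c' ≠ 0 := by simpa [hc'] using hc
  letI Rp := Localization.AtPrime p.asIdeal
  haveI : IsDiscreteValuationRing Rp :=
    IsLocalization.AtPrime.isDiscreteValuationRing_of_dedekind_domain R p.ne_bot _
  have key : ∀ z : Rp, ∀ x : F, algebraMap Rp F z = x →
      ∃ τ σ : R, σ ∉ p.asIdeal ∧ algebraMap R F σ * x = algebraMap R F τ := by
    intro z x hzx
    obtain ⟨⟨τ, σ⟩, hmk⟩ := IsLocalization.mk'_surjective p.asIdeal.primeCompl z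
    replace hmk : IsLocalization.mk' Rp τ σ = z := hmk
    refine ⟨τ, σ, σ.2, ?_⟩
    have spec : z * algebraMap R Rp σ = algebraMap R Rp τ := by
      rw [← hmk]; exact IsLocalization.mk'_spec _ τ σ
    have := congrArg (algebraMap Rp F) spec
    rw [map_mul, hzx, ← IsScalarTower.algebraMap_apply, ← IsScalarTower.algebraMap_apply] at this
    rw [mul_comm]; exact this
  rcases ValuationRing.isInteger_or_isInteger Rp c' with ⟨z, hz⟩ | ⟨z, hz⟩
  · exact Or.inl (key z c' hz)
  · by_cases hu : IsUnit z
    · obtain ⟨u, rfl⟩ := hu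
      have : algebraMap Rp F ((u⁻¹ : Rpˣ) : Rp) = c' := by
        have h1 : algebraMap Rp F ((u⁻¹ : Rpˣ) : Rp) * algebraMap Rp F (u : Rp) = 1 := by
          rw [← map_mul]; simp
        rw [hz] at h1
        exact (mul_inv_eq_one₀ hc0').mp h1
      exact Or.inl (key _ c' this)
    · obtain ⟨⟨τ, σ⟩, hmk⟩ := IsLocalization.mk'_surjective p.asIdeal.primeCompl z
      replace hmk : IsLocalization.mk' Rp τ σ = z := hmk
      have hτ : τ ∈ p.asIdeal := by
        by_contra hτ
        exact hu (hmk ▸ (IsLocalization.AtPrime.isUnit_mk'_iff Rp p.asIdeal τ σ).mpr hτ)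
      refine Or.inr ⟨τ, σ, hτ, σ.2, ?_⟩
      have spec : z * algebraMap R Rp σ = algebraMap R Rp τ := by
        rw [← hmk]; exact IsLocalization.mk'_spec _ τ σ
      have := congrArg (algebraMap Rp F) spec
      rw [map_mul, hz, ← IsScalarTower.algebraMap_apply, ← IsScalarTower.algebraMap_apply] at this
      rw [← this]
      rw [mul_comm, ← mul_assoc, mul_inv_cancel₀ hc0', one_mul]

lemma map_k_eq_K {c d : k} (h : c = d) : True := trivial

/-- image in K of an equation in k -/
lemma keq_to_K {σ τ : R} {c : k} (h : algebraMap R k σ * c = algebraMap R k τ) :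
    algebraMap R (AlgebraicClosure k) σ * algebraMap k (AlgebraicClosure k) c
      = algebraMap R (AlgebraicClosure k) τ := by
  have := congrArg (algebraMap k (AlgebraicClosure k)) h
  rwa [map_mul, algebraMap_R_k_K, algebraMap_R_k_K] at this

lemma vnonneg_of_rep (hQ : Q.IsPrime) (hpQ : LiesOver R k p Q) {c : k} {τ σ : R}
    (hσ : σ ∉ p.asIdeal) (h : algebraMap R k σ * c = algebraMap R k τ) :
    VNonneg R k Q (algebraMap k (AlgebraicClosure k) c) := by
  refine ⟨algebraMap R (IntClosure R k) τ, algebraMap R (IntClosure R k) σ,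
    not_mem_of_liesOver hpQ hσ, ?_⟩
  rw [coe_algebraMap_IC, coe_algebraMap_IC]
  exact keq_to_K h

lemma vpos_of_rep (hQ : Q.IsPrime) (hpQ : LiesOver R k p Q) {c : k} {τ σ : R}
    (hτ : τ ∈ p.asIdeal) (hσ : σ ∉ p.asIdeal) (h : algebraMap R k σ * c = algebraMap R k τ) :
    VPos R k Q (algebraMap k (AlgebraicClosure k) c) := by
  refine ⟨algebraMap R (IntClosure R k) τ, algebraMap R (IntClosure R k) σ,
    mem_of_liesOver hpQ hτ, not_mem_of_liesOver hpQ hσ, ?_⟩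
  rw [coe_algebraMap_IC, coe_algebraMap_IC]
  exact keq_to_K h

lemma vpos_algebraMap_of_mem (hQ : Q.IsPrime) (hpQ : LiesOver R k p Q) {r : R}
    (hr : r ∈ p.asIdeal) : VPos R k Q (algebraMap R (AlgebraicClosure k) r) :=
  ⟨algebraMap R (IntClosure R k) r, 1, mem_of_liesOver hpQ hr, one_not_mem hQ,
    by rw [coe_algebraMap_IC]; simp⟩

lemma vnonneg_algebraMap (hQ : Q.IsPrime) (r : R) :
    VNonneg R k Q (algebraMap R (AlgebraicClosure k) r) := by
  have := vnonneg_coe hQ (algebraMap R (IntClosure R k) r)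
  rwa [coe_algebraMap_IC] at this

lemma rep_of_vnonneg (hQ : Q.IsPrime) (hpQ : LiesOver R k p Q) {c : k}
    (h : VNonneg R k Q (algebraMap k (AlgebraicClosure k) c)) :
    ∃ τ σ : R, σ ∉ p.asIdeal ∧ algebraMap R k σ * c = algebraMap R k τ := by
  rcases dichotomy p c with h1 | ⟨τ, σ, hτ, hσ, heq⟩
  · exact h1
  exfalso
  obtain ⟨a, b, hb, hab⟩ := h
  have hK := keq_to_K heq
  -- τ_K * c_K = σ_K ; b * c_K = a
  have key : (b : AlgebraicClosure k) * algebraMap R (AlgebraicClosure k) σ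
      = algebraMap R (AlgebraicClosure k) τ * (a : AlgebraicClosure k) := by
    rw [← hK, ← hab]; ring
  have key2 : b * algebraMap R (IntClosure R k) σ = algebraMap R (IntClosure R k) τ * a :=
    Subtype.coe_injective (by push_cast [coe_algebraMap_IC]; exact key)
  have hmem : b * algebraMap R (IntClosure R k) σ ∈ Q := by
    rw [key2]; exact Q.mul_mem_right _ (mem_of_liesOver hpQ hτ)
  rcases hQ.mem_or_mem hmem with h | h
  · exact hb h
  · exact not_mem_of_liesOver hpQ hσ h

lemma exists_inv_mod (p : HeightOneSpectrum R) {σ : R} (hσ : σ ∉ p.asIdeal) :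
    ∃ w : R, σ * w - 1 ∈ p.asIdeal := by
  have hmax : p.asIdeal.IsMaximal := Ring.DimensionLEOne.maximalOfPrime p.ne_bot p.isPrime
  obtain ⟨y, i, hi, hyi⟩ := hmax.exists_inv hσ
  refine ⟨y, ?_⟩
  have : σ * y - 1 = -i := by linear_combination hyi
  rw [this]; exact p.asIdeal.neg_mem hi

lemma vpos_pow_sub_pow (hQ : Q.IsPrime) {y z : AlgebraicClosure k}
    (hy : VNonneg R k Q y) (hz : VNonneg R k Q z) (hyz : VPos R k Q (y - z)) (n : ℕ) :
    VPos R k Q (y ^ n - z ^ n) := by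
  induction n with
  | zero => simpa using ⟨0, 1, Q.zero_mem, one_not_mem hQ, by simp⟩
  | succ m ih =>
      have : y ^ (m + 1) - z ^ (m + 1) = y ^ m * (y - z) + z * (y ^ m - z ^ m) := by ring
      rw [this]
      have hyp : VNonneg R k Q (y ^ m) := by
        clear this ih
        induction m with
        | zero => simpa using vnonneg_coe hQ 1
        | succ j ihj => rw [pow_succ]; exact vnonneg_mul hQ ihj hy
      refine vpos_add hQ ?_ ?_
      · rw [mul_comm]
        exact vpos_mul_vnonneg hQ hyz hyp
      · rw [mul_comm z]
        exact vpos_mul_vnonneg hQ ih hz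

lemma vnonneg_pow (hQ : Q.IsPrime) {y : AlgebraicClosure k} (hy : VNonneg R k Q y) (n : ℕ) :
    VNonneg R k Q (y ^ n) := by
  induction n with
  | zero => simpa using vnonneg_coe hQ 1
  | succ m ih => rw [pow_succ]; exact vnonneg_mul hQ ih hy

lemma vpos_zero (hQ : Q.IsPrime) : VPos R k Q 0 :=
  ⟨0, 1, Q.zero_mem, one_not_mem hQ, by simp⟩

lemma vpos_aeval_sub (hQ : Q.IsPrime) (P : Polynomial R) {y z : AlgebraicClosure k}
    (hy : VNonneg R k Q y) (hz : VNonneg R k Q z) (hyz : VPos R k Q (y - z)) :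
    VPos R k Q (Polynomial.aeval y P - Polynomial.aeval z P) := by
  induction P using Polynomial.induction_on' with
  | add p q hp hq =>
      simp only [map_add]
      have : aeval y p + aeval y q - (aeval z p + aeval z q)
          = (aeval y p - aeval z p) + (aeval y q - aeval z q) := by ring
      rw [this]; exact vpos_add hQ hp hq
  | monomial n a =>
      simp only [aeval_monomial]
      have : algebraMap R (AlgebraicClosure k) a * y ^ n
          - algebraMap R (AlgebraicClosure k) a * z ^ n
          = algebraMap R (AlgebraicClosure k) a * (y ^ n - z ^ n) := by ring
      rw [this, mul_comm]
      exact vpos_mul_vnonneg hQ (vpos_pow_sub_pow hQ hy hz hyz n) (vnonneg_algebraMap hQ a)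

open IntermediateField in
lemma tower_RLK (L : IntermediateField k (AlgebraicClosure k)) :
    IsScalarTower R L (AlgebraicClosure k) :=
  IsScalarTower.of_algebraMap_eq fun r => by
    rw [IsScalarTower.algebraMap_apply R k (AlgebraicClosure k) r,
      IsScalarTower.algebraMap_apply R k L r,
      ← IsScalarTower.algebraMap_apply k L (AlgebraicClosure k)]

open IntermediateField in
lemma lemA (p : HeightOneSpectrum R) (β : AlgebraicClosure k) (r u s : R)
    (hr : r ∉ p.asIdeal) (hu : u ∉ p.asIdeal) (hs : s ∉ p.asIdeal)
    (hki : IsIntegral k (algebraMap R (AlgebraicClosure k) r * β))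
    (hγ : IsIntegral R (algebraMap R (AlgebraicClosure k) r * β))
    (hd : algebraMap R k u =
      algebraMap R k s * Algebra.discr k (IntermediateField.adjoin.powerBasis hki).basis)
    (x : IntClosure R k)
    (hx : (x : AlgebraicClosure k) ∈ IntermediateField.adjoin k {β}) (c : k) :
    ∃ ρ : R, ∀ Q : Ideal (IntClosure R k), Q.IsPrime → LiesOver R k p Q →
      VNonneg R k Q (algebraMap k (AlgebraicClosure k) c) → VNonneg R k Q β →
      VPos R k Q (algebraMap k (AlgebraicClosure k) c - β) →
      x - algebraMap R (IntClosure R k) ρ ∈ Q := by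
  set γ : AlgebraicClosure k := algebraMap R (AlgebraicClosure k) r * β with hγdef
  set L : IntermediateField k (AlgebraicClosure k) := IntermediateField.adjoin k {γ} with hLdef
  haveI := tower_RLK (R := R) L
  set PB := IntermediateField.adjoin.powerBasis hki with hPBdef
  set d : k := Algebra.discr k PB.basis with hddef
  have hr0 : r ≠ 0 := fun h => hr (h ▸ p.asIdeal.zero_mem)
  have hadj : IntermediateField.adjoin k {β} = L := by
    apply le_antisymm
    · rw [IntermediateField.adjoin_le_iff, Set.singleton_subset_iff]
      have hγL : γ ∈ L := IntermediateField.mem_adjoin_simple_self k γ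
      have hrk0 : algebraMap R k r ≠ 0 := fun h =>
        hr0 ((map_eq_zero_iff _ (IsFractionRing.injective R k)).mp h)
      have hrkK : (algebraMap k (AlgebraicClosure k)) ((algebraMap R k) r) ≠ 0 := by
        simpa using hrk0
      have hγalt : γ = algebraMap k (AlgebraicClosure k) (algebraMap R k r) * β := by
        rw [hγdef, algebraMap_R_k_K]
      have : β = (algebraMap k (AlgebraicClosure k) (algebraMap R k r))⁻¹ * γ := by
        rw [eq_inv_mul_iff_mul_eq₀ hrkK, hγalt]
      rw [this]
      exact L.mul_mem (L.inv_mem (L.algebraMap_mem _)) hγL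
    · rw [IntermediateField.adjoin_le_iff, Set.singleton_subset_iff]
      have hβ : β ∈ IntermediateField.adjoin k {β} :=
        IntermediateField.mem_adjoin_simple_self k β
      have : γ = algebraMap k (AlgebraicClosure k) (algebraMap R k r) * β := by
        rw [algebraMap_R_k_K]
      rw [this]
      exact IntermediateField.mul_mem _ (IntermediateField.algebraMap_mem _ _) hβ
  have hxL : (x : AlgebraicClosure k) ∈ L := hadj ▸ hx
  set z : L := ⟨(x : AlgebraicClosure k), hxL⟩ with hzdef
  have hz : IsIntegral R z :=
    (isIntegral_algebraMap_iff (algebraMap L (AlgebraicClosure k)).injective).mp x.2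
  have hgenK : algebraMap L (AlgebraicClosure k) PB.gen = γ := by
    rw [hPBdef, IntermediateField.adjoin.powerBasis_gen]
    exact IntermediateField.AdjoinSimple.algebraMap_gen k γ
  have hgen : IsIntegral R PB.gen :=
    (isIntegral_algebraMap_iff (algebraMap L (AlgebraicClosure k)).injective).mp
      (by rw [hgenK]; exact hγ)
  haveI : FiniteDimensional k L := IntermediateField.adjoin.finiteDimensional hki
  have hmem := Algebra.discr_mul_isIntegral_mem_adjoin (R := R) (K := k) hgen hz
  rw [Algebra.adjoin_singleton_eq_range_aeval] at hmem
  obtain ⟨P, hP⟩ := hmem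
  have hPK : Polynomial.aeval γ P
      = algebraMap k (AlgebraicClosure k) d * (x : AlgebraicClosure k) := by
    have h1 : Polynomial.aeval (algebraMap L (AlgebraicClosure k) PB.gen) P
        = algebraMap L (AlgebraicClosure k) (Polynomial.aeval PB.gen P) :=
      Polynomial.aeval_algebraMap_apply _ _ _
    have h2 := h1.trans (congrArg (algebraMap L (AlgebraicClosure k)) hP)
    rw [hgenK] at h2
    rw [h2]
    show ((d • z : L) : AlgebraicClosure k) = _
    rw [hzdef]
    push_cast [Algebra.smul_def]
    rfl
  set e : k := Polynomial.aeval (algebraMap R k r * c) P with hedef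
  have hek : algebraMap k (AlgebraicClosure k) e
      = Polynomial.aeval (algebraMap R (AlgebraicClosure k) r
          * algebraMap k (AlgebraicClosure k) c) P := by
    have h1 : Polynomial.aeval (algebraMap k (AlgebraicClosure k) (algebraMap R k r * c)) P
        = algebraMap k (AlgebraicClosure k) (Polynomial.aeval (algebraMap R k r * c) P) :=
      Polynomial.aeval_algebraMap_apply _ _ _
    rw [map_mul, algebraMap_R_k_K] at h1
    exact h1.symm
  have hkey : ∀ Q : Ideal (IntClosure R k), Q.IsPrime → LiesOver R k p Q →
      VNonneg R k Q (algebraMap k (AlgebraicClosure k) c) → VNonneg R k Q β →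
      VPos R k Q (algebraMap k (AlgebraicClosure k) c - β) →
      VPos R k Q (algebraMap k (AlgebraicClosure k) d * (x : AlgebraicClosure k)
        - algebraMap k (AlgebraicClosure k) e) := by
    intro Q hQ hpQ hc hβ hcβ
    rw [← hPK, hek]
    refine vpos_aeval_sub hQ P ?_ ?_ ?_
    · have : γ = ((⟨γ, hγ⟩ : IntClosure R k) : AlgebraicClosure k) := rfl
      rw [this]; exact vnonneg_coe hQ _
    · exact vnonneg_mul hQ (vnonneg_algebraMap hQ r) hc
    · have : γ - algebraMap R (AlgebraicClosure k) r * algebraMap k (AlgebraicClosure k) c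
          = -((algebraMap k (AlgebraicClosure k) c - β)
              * algebraMap R (AlgebraicClosure k) r) := by rw [hγdef]; ring
      rw [this]
      exact vpos_neg (vpos_mul_vnonneg hQ hcβ (vnonneg_algebraMap hQ r))
  obtain hE | hE := Classical.em (∃ Q : Ideal (IntClosure R k), Q.IsPrime ∧ LiesOver R k p Q ∧
      VNonneg R k Q (algebraMap k (AlgebraicClosure k) c) ∧ VNonneg R k Q β ∧
      VPos R k Q (algebraMap k (AlgebraicClosure k) c - β))
  swap
  · exact ⟨0, fun Q hQ hpQ hc hβ hcβ => absurd ⟨Q, hQ, hpQ, hc, hβ, hcβ⟩ hE⟩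
  obtain ⟨Q₀, hQ₀, hpQ₀, hc₀, hβ₀, hcβ₀⟩ := hE
  have hdnn : VNonneg R k Q₀ (algebraMap k (AlgebraicClosure k) d) :=
    vnonneg_of_rep hQ₀ hpQ₀ hs hd.symm
  have hednn : VNonneg R k Q₀ (algebraMap k (AlgebraicClosure k) e) := by
    have h1 : algebraMap k (AlgebraicClosure k) e
        = algebraMap k (AlgebraicClosure k) d * (x : AlgebraicClosure k)
          + (-(algebraMap k (AlgebraicClosure k) d * (x : AlgebraicClosure k)
              - algebraMap k (AlgebraicClosure k) e)) := by ring
    rw [h1]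
    exact vnonneg_add hQ₀ (vnonneg_mul hQ₀ hdnn (vnonneg_coe hQ₀ x))
      (vnonneg_neg (vpos_vnonneg (hkey Q₀ hQ₀ hpQ₀ hc₀ hβ₀ hcβ₀)))
  obtain ⟨τ, σ, hσ, hrep⟩ := rep_of_vnonneg hQ₀ hpQ₀ hednn
  have hσu : σ * u ∉ p.asIdeal := fun h => by
    rcases p.isPrime.mem_or_mem h with h | h; exacts [hσ h, hu h]
  obtain ⟨w, hw⟩ := exists_inv_mod p hσu
  refine ⟨τ * s * w, fun Q hQ hpQ hc hβ hcβ => ?_⟩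
  have hdK := keq_to_K (τ := u) (σ := s) (c := d) hd.symm
  have hrepK := keq_to_K hrep
  have hident : algebraMap R (AlgebraicClosure k) (σ * u)
        * ((x : AlgebraicClosure k) - algebraMap R (AlgebraicClosure k) (τ * s * w))
      = (algebraMap k (AlgebraicClosure k) d * (x : AlgebraicClosure k)
            - algebraMap k (AlgebraicClosure k) e)
          * algebraMap R (AlgebraicClosure k) σ * algebraMap R (AlgebraicClosure k) s
        + (algebraMap R (AlgebraicClosure k) (σ * u * w - 1))
          * (-(algebraMap R (AlgebraicClosure k) (τ * s))) := by
    push_cast [map_mul, map_sub, map_one]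
    linear_combination (-((x : AlgebraicClosure k) * algebraMap R (AlgebraicClosure k) σ)) * hdK
      + algebraMap R (AlgebraicClosure k) s * hrepK
  have hvpos : VPos R k Q (algebraMap R (AlgebraicClosure k) (σ * u)
      * ((x : AlgebraicClosure k) - algebraMap R (AlgebraicClosure k) (τ * s * w))) := by
    rw [hident]
    refine vpos_add hQ ?_ ?_
    · exact vpos_mul_vnonneg hQ
        (vpos_mul_vnonneg hQ (hkey Q hQ hpQ hc hβ hcβ) (vnonneg_algebraMap hQ σ))
        (vnonneg_algebraMap hQ s)
    · exact vpos_mul_vnonneg hQ (vpos_algebraMap_of_mem hQ hpQ hw)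
        (vnonneg_neg (vnonneg_algebraMap hQ _))
  have hmemQ : algebraMap R (IntClosure R k) (σ * u)
      * (x - algebraMap R (IntClosure R k) (τ * s * w)) ∈ Q := by
    rw [← vpos_coe_iff hQ]
    have : ((algebraMap R (IntClosure R k) (σ * u)
        * (x - algebraMap R (IntClosure R k) (τ * s * w)) : IntClosure R k)
          : AlgebraicClosure k)
        = algebraMap R (AlgebraicClosure k) (σ * u)
          * ((x : AlgebraicClosure k) - algebraMap R (AlgebraicClosure k) (τ * s * w)) := by
      push_cast [coe_algebraMap_IC]
      ring
    rw [this]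
    exact hvpos
  rcases hQ.mem_or_mem hmemQ with h | h
  · exact absurd h (not_mem_of_liesOver hpQ hσu)
  · exact h



lemma adjoin_inv (α : AlgebraicClosure k) :
    IntermediateField.adjoin k {α} = IntermediateField.adjoin k {α⁻¹} := by
  apply le_antisymm
  · rw [IntermediateField.adjoin_le_iff, Set.singleton_subset_iff]
    simpa using IntermediateField.inv_mem _ (IntermediateField.mem_adjoin_simple_self k α⁻¹)
  · rw [IntermediateField.adjoin_le_iff, Set.singleton_subset_iff]
    exact IntermediateField.inv_mem _ (IntermediateField.mem_adjoin_simple_self k α)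

lemma bot_int (x : IntClosure R k)
    (hx : (x : AlgebraicClosure k) ∈ (⊥ : IntermediateField k (AlgebraicClosure k))) :
    ∃ ρ : R, x = algebraMap R (IntClosure R k) ρ := by
  rw [IntermediateField.mem_bot] at hx
  obtain ⟨e, he⟩ := hx
  have hint : IsIntegral R e :=
    (isIntegral_algebraMap_iff (algebraMap k (AlgebraicClosure k)).injective).mp
      (by rw [he]; exact x.2)
  obtain ⟨ρ, hρ⟩ := IsIntegrallyClosed.isIntegral_iff.mp hint
  refine ⟨ρ, Subtype.coe_injective ?_⟩
  show (x : AlgebraicClosure k)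
      = ((algebraMap R (IntClosure R k) ρ : IntClosure R k) : AlgebraicClosure k)
  rw [coe_algebraMap_IC, ← algebraMap_R_k_K, hρ, he]

lemma finMeet_none {Q : Ideal (IntClosure R k)} (X : P1 (AlgebraicClosure k)) :
    ¬ FinMeet R k Q X none := by cases X <;> simp [FinMeet]

lemma norm_meets {Q : Ideal (IntClosure R k)} (t₀ : P1 k) (α : AlgebraicClosure k)
    (h : MeetsAt R k Q (emb k t₀) (some α)) :
    (∃ e : k, t₀ = some e ∧ VNonneg R k Q (algebraMap k (AlgebraicClosure k) e) ∧
        VNonneg R k Q α ∧ VPos R k Q (algebraMap k (AlgebraicClosure k) e - α)) ∨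
    (α ≠ 0 ∧ ∃ c : k, ((t₀ = none ∧ c = 0) ∨ (∃ e : k, t₀ = some e ∧ e ≠ 0 ∧ c = e⁻¹)) ∧
        VNonneg R k Q (algebraMap k (AlgebraicClosure k) c) ∧ VNonneg R k Q α⁻¹ ∧
        VPos R k Q (algebraMap k (AlgebraicClosure k) c - α⁻¹)) := by
  rcases h with h | h
  · cases t₀ with
    | none => exact absurd h (by simp [emb, FinMeet])
    | some e =>
        simp only [emb, Option.map_some, FinMeet] at h
        exact Or.inl ⟨e, rfl, h.1, h.2.1, h.2.2⟩
  · by_cases hα : α = 0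
    · subst hα
      rw [show pinv (some (0 : AlgebraicClosure k)) = none from if_pos rfl] at h
      exact absurd h (finMeet_none _)
    · refine Or.inr ⟨hα, ?_⟩
      rw [show pinv (some α) = some α⁻¹ from if_neg hα] at h
      cases t₀ with
      | none =>
          simp only [emb, Option.map_none, pinv, FinMeet] at h
          exact ⟨0, Or.inl ⟨rfl, rfl⟩, by rw [map_zero]; exact ⟨h.1, h.2.1, h.2.2⟩⟩
      | some e =>
          by_cases he : e = 0
          · subst he
            simp [emb, pinv, FinMeet] at h
          · have hek : algebraMap k (AlgebraicClosure k) e ≠ 0 := by simpa using he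
            rw [show pinv (emb k (some e)) = some (algebraMap k (AlgebraicClosure k) e⁻¹) by
              simp [emb, pinv, if_neg hek, map_inv₀]] at h
            simp only [FinMeet] at h
            exact ⟨e⁻¹, Or.inr ⟨e, rfl, he, rfl⟩, h.1, h.2.1, h.2.2⟩

set_option maxHeartbeats 1000000 in
lemma convert_B2_to_B1 {p : HeightOneSpectrum R} {Q : Ideal (IntClosure R k)}
    (hQ : Q.IsPrime) (hpQ : LiesOver R k p Q)
    {e : k} {α : AlgebraicClosure k} (hα : α ≠ 0) {u s : R}
    (hu : u ∉ p.asIdeal) (hs : s ∉ p.asIdeal)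
    (he : algebraMap R k s * e = algebraMap R k u)
    (h1 : VNonneg R k Q α⁻¹)
    (h2 : VPos R k Q (algebraMap k (AlgebraicClosure k) e⁻¹ - α⁻¹)) :
    VNonneg R k Q α ∧ VPos R k Q (algebraMap k (AlgebraicClosure k) e - α) := by
  have hu0 : u ≠ 0 := fun h => hu (h ▸ p.asIdeal.zero_mem)
  have he0 : e ≠ 0 := by
    intro h
    apply hu0
    have : algebraMap R k u = 0 := by rw [← he, h, mul_zero]
    exact (map_eq_zero_iff _ (IsFractionRing.injective R k)).mp this
  have heK0 : algebraMap k (AlgebraicClosure k) e ≠ 0 := by simpa using he0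
  have hsK := keq_to_K he
  have hue : algebraMap R (AlgebraicClosure k) u * algebraMap k (AlgebraicClosure k) e⁻¹
      = algebraMap R (AlgebraicClosure k) s := by
    rw [map_inv₀, mul_inv_eq_iff_eq_mul₀ heK0]
    exact hsK.symm
  obtain ⟨a, b, hb, hab⟩ := h1
  obtain ⟨a', b', ha', hb', hab'⟩ := h2
  have Kident : (b' : AlgebraicClosure k) * algebraMap R (AlgebraicClosure k) s * b
      - (b' : AlgebraicClosure k) * algebraMap R (AlgebraicClosure k) u * a
      = (a' : AlgebraicClosure k) * algebraMap R (AlgebraicClosure k) u * b := by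
    linear_combination (algebraMap R (AlgebraicClosure k) u * (b' : AlgebraicClosure k)) * hab
      + (algebraMap R (AlgebraicClosure k) u * (b : AlgebraicClosure k)) * hab'
      - ((b' : AlgebraicClosure k) * (b : AlgebraicClosure k)) * hue
  have Aident : b' * algebraMap R (IntClosure R k) s * b
      - b' * algebraMap R (IntClosure R k) u * a
      = a' * algebraMap R (IntClosure R k) u * b :=
    Subtype.coe_injective (by push_cast [coe_algebraMap_IC]; exact Kident)
  have ha : a ∉ Q := by
    intro haQ
    have h3 : b' * algebraMap R (IntClosure R k) s * b ∈ Q := by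
      have : b' * algebraMap R (IntClosure R k) s * b
          = (a' * algebraMap R (IntClosure R k) u * b)
            + b' * algebraMap R (IntClosure R k) u * a := by linear_combination Aident
      rw [this]
      exact Q.add_mem (Q.mul_mem_right _ (Q.mul_mem_right _ ha')) (Q.mul_mem_left _ haQ)
    rcases hQ.mem_or_mem h3 with h4 | h4
    · rcases hQ.mem_or_mem h4 with h5 | h5
      · exact hb' h5
      · exact not_mem_of_liesOver hpQ hs h5
    · exact hb h4
  have hab2 : (a : AlgebraicClosure k) * α = (b : AlgebraicClosure k) :=
    calc (a : AlgebraicClosure k) * α = ((b : AlgebraicClosure k) * α⁻¹) * α := by rw [hab]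
    _ = b := by rw [mul_assoc, inv_mul_cancel₀ hα, mul_one]
  have hαnn : VNonneg R k Q α := ⟨b, a, ha, hab2⟩
  refine ⟨hαnn, ?_⟩
  have hid : algebraMap k (AlgebraicClosure k) e - α
      = -((algebraMap k (AlgebraicClosure k) e⁻¹ - α⁻¹)
          * algebraMap k (AlgebraicClosure k) e * α) := by
    rw [map_inv₀]
    have h3 : (algebraMap k (AlgebraicClosure k) e)⁻¹ * algebraMap k (AlgebraicClosure k) e = 1 :=
      inv_mul_cancel₀ heK0
    have h4 : α⁻¹ * α = 1 := inv_mul_cancel₀ hα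
    linear_combination α * h3 - (algebraMap k (AlgebraicClosure k) e) * h4
  rw [hid]
  refine vpos_neg (vpos_mul_vnonneg hQ (vpos_mul_vnonneg hQ ?_ ?_) hαnn)
  · exact ⟨a', b', ha', hb', hab'⟩
  · exact vnonneg_of_rep hQ hpQ hs he


variable (R k)

/-- **Lemma 3.2**: for every `t₁ ∈ P^1(k̃)` there is a finite set `S₁` of primes of `k`,
depending only on `t₁`, such that for every prime `p ∉ S₁` and every `t₀ ∈ P^1(k)`
distinct from `t₁` meeting `t₁` modulo `p`, there is a unique prime `p'` of `k(t₁)`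
lying over `p` with residue degree `1` at which `t₀` and `t₁` meet.  (Primes of `k(t₁)`
are represented by primes of the integral closure of `R` in the algebraic closure of `k`;
the uniqueness asserts that any two of them have the same restriction to `k(t₁)`.) -/
theorem unique_residue_degree_one_prime_of_meeting
    (hres : PerfectResidueFields R)
    (t₁ : P1 (AlgebraicClosure k)) :
    ∃ S₁ : Finset (HeightOneSpectrum R),
      ∀ p : HeightOneSpectrum R, p ∉ S₁ →
      ∀ t₀ : P1 k, emb k t₀ ≠ t₁ →
        MeetsModulo R k p (emb k t₀) t₁ →
        (∃ Q : Ideal (IntClosure R k), Q.IsPrime ∧ LiesOver R k p Q ∧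
          ResidueDegreeOne R k t₁ Q ∧ MeetsAt R k Q (emb k t₀) t₁) ∧
        (∀ Q₁ Q₂ : Ideal (IntClosure R k),
          (Q₁.IsPrime ∧ LiesOver R k p Q₁ ∧ ResidueDegreeOne R k t₁ Q₁ ∧
            MeetsAt R k Q₁ (emb k t₀) t₁) →
          (Q₂.IsPrime ∧ LiesOver R k p Q₂ ∧ ResidueDegreeOne R k t₁ Q₂ ∧
            MeetsAt R k Q₂ (emb k t₀) t₁) →
          ∀ x : IntClosure R k, (x : AlgebraicClosure k) ∈ kfield k t₁ →
            (x ∈ Q₁ ↔ x ∈ Q₂)) := by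
  classical
  cases t₁ with
  | none =>
      refine ⟨∅, fun p _ t₀ hne hmeet => ?_⟩
      obtain ⟨-, Q₀, hQ₀, hpQ₀, hM₀⟩ := hmeet
      have hres1 : ∀ Q : Ideal (IntClosure R k), LiesOver R k p Q →
          ResidueDegreeOne R k none Q := by
        intro Q hpQ x hx
        obtain ⟨ρ, hρ⟩ := bot_int x hx
        exact ⟨ρ, by rw [hρ]; simpa using Q.zero_mem⟩
      refine ⟨⟨Q₀, hQ₀, hpQ₀, hres1 Q₀ hpQ₀, hM₀⟩, ?_⟩
      rintro Q₁ Q₂ ⟨hQ₁, hpQ₁, -, -⟩ ⟨hQ₂, hpQ₂, -, -⟩ x hx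
      obtain ⟨ρ, hρ⟩ := bot_int x hx
      rw [hρ]
      exact (hpQ₁ ρ).trans (hpQ₂ ρ).symm
  | some α =>
      have hαint : IsIntegral k α :=
        (Algebra.IsAlgebraic.isAlgebraic (R := k) α).isIntegral
      have hαinvint : IsIntegral k (α⁻¹) :=
        (Algebra.IsAlgebraic.isAlgebraic (R := k) α⁻¹).isIntegral
      have hinjRK : Function.Injective (algebraMap R (AlgebraicClosure k)) := by
        rw [IsScalarTower.algebraMap_eq R k (AlgebraicClosure k)]
        exact (algebraMap k (AlgebraicClosure k)).injective.comp (IsFractionRing.injective R k)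
      have hRalg : IsAlgebraic R α :=
        (IsFractionRing.isAlgebraic_iff R k (AlgebraicClosure k)).mpr hαint.isAlgebraic
      have hRalginv : IsAlgebraic R (α⁻¹) :=
        (IsFractionRing.isAlgebraic_iff R k (AlgebraicClosure k)).mpr hαinvint.isAlgebraic
      obtain ⟨r₁, hr₁0, hy₁⟩ :=
        IsAlgebraic.exists_integral_multiple hRalg
      obtain ⟨r₂, hr₂0, hy₂⟩ :=
        IsAlgebraic.exists_integral_multiple hRalginv
      have hγ₁ : IsIntegral R (algebraMap R (AlgebraicClosure k) r₁ * α) := by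
        rw [← Algebra.smul_def]; exact hy₁
      have hγ₂ : IsIntegral R (algebraMap R (AlgebraicClosure k) r₂ * α⁻¹) := by
        rw [← Algebra.smul_def]; exact hy₂
      have hki₁ : IsIntegral k (algebraMap R (AlgebraicClosure k) r₁ * α) :=
        (Algebra.IsAlgebraic.isAlgebraic (R := k) _).isIntegral
      have hki₂ : IsIntegral k (algebraMap R (AlgebraicClosure k) r₂ * α⁻¹) :=
        (Algebra.IsAlgebraic.isAlgebraic (R := k) _).isIntegral
      haveI := IntermediateField.adjoin.finiteDimensional hki₁
      haveI := IntermediateField.adjoin.finiteDimensional hki₂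
      set d₁ := Algebra.discr k (IntermediateField.adjoin.powerBasis hki₁).basis with hd₁def
      set d₂ := Algebra.discr k (IntermediateField.adjoin.powerBasis hki₂).basis with hd₂def
      have hd₁0 : d₁ ≠ 0 := Algebra.discr_not_zero_of_basis k _
      have hd₂0 : d₂ ≠ 0 := Algebra.discr_not_zero_of_basis k _
      obtain ⟨u₁, s₁, hs₁mem, hds₁⟩ := IsFractionRing.div_surjective (A := R) d₁
      obtain ⟨u₂, s₂, hs₂mem, hds₂⟩ := IsFractionRing.div_surjective (A := R) d₂
      have hs₁0 : s₁ ≠ 0 := nonZeroDivisors.ne_zero hs₁mem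
      have hs₂0 : s₂ ≠ 0 := nonZeroDivisors.ne_zero hs₂mem
      have hs₁K : algebraMap R k s₁ ≠ 0 :=
        fun h => hs₁0 ((map_eq_zero_iff _ (IsFractionRing.injective R k)).mp h)
      have hs₂K : algebraMap R k s₂ ≠ 0 :=
        fun h => hs₂0 ((map_eq_zero_iff _ (IsFractionRing.injective R k)).mp h)
      have heq₁ : algebraMap R k u₁ = algebraMap R k s₁ * d₁ := by
        rw [← hds₁]; field_simp
      have heq₂ : algebraMap R k u₂ = algebraMap R k s₂ * d₂ := by
        rw [← hds₂]; field_simp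
      have hu₁0 : u₁ ≠ 0 := by
        intro h
        rw [h, map_zero] at heq₁
        exact (mul_ne_zero hs₁K hd₁0) heq₁.symm
      have hu₂0 : u₂ ≠ 0 := by
        intro h
        rw [h, map_zero] at heq₂
        exact (mul_ne_zero hs₂K hd₂0) heq₂.symm
      set M := r₁ * r₂ * u₁ * s₁ * u₂ * s₂ with hMdef
      have hM0 : M ≠ 0 := by
        rw [hMdef]
        exact mul_ne_zero (mul_ne_zero (mul_ne_zero (mul_ne_zero
          (mul_ne_zero hr₁0 hr₂0) hu₁0) hs₁0) hu₂0) hs₂0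
      have hfin : {v : HeightOneSpectrum R | v.asIdeal ∣ Ideal.span {M}}.Finite :=
        Ideal.finite_factors
          (by rw [Ne, Ideal.zero_eq_bot, Ideal.span_singleton_eq_bot]; exact hM0)
      refine ⟨hfin.toFinset, fun p hp t₀ hne hmeet => ?_⟩
      have hMp : M ∉ p.asIdeal := by
        intro h
        exact hp (hfin.mem_toFinset.mpr (Ideal.dvd_span_singleton.mpr h))
      have hfac : ∀ a : R, a ∣ M → a ∉ p.asIdeal := by
        rintro a ⟨c2, hc2⟩ hap
        exact hMp (hc2 ▸ Ideal.mul_mem_right _ _ hap)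
      have hr₁p := hfac r₁ ⟨r₂ * u₁ * s₁ * u₂ * s₂, by rw [hMdef]; ring⟩
      have hr₂p := hfac r₂ ⟨r₁ * u₁ * s₁ * u₂ * s₂, by rw [hMdef]; ring⟩
      have hu₁p := hfac u₁ ⟨r₁ * r₂ * s₁ * u₂ * s₂, by rw [hMdef]; ring⟩
      have hs₁p := hfac s₁ ⟨r₁ * r₂ * u₁ * u₂ * s₂, by rw [hMdef]; ring⟩
      have hu₂p := hfac u₂ ⟨r₁ * r₂ * u₁ * s₁ * s₂, by rw [hMdef]; ring⟩
      have hs₂p := hfac s₂ ⟨r₁ * r₂ * u₁ * s₁ * u₂, by rw [hMdef]; ring⟩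
      obtain ⟨-, Q₀, hQ₀, hpQ₀, hM₀⟩ := hmeet
      have lem1 : ∀ (c : k) (x : IntClosure R k),
          (x : AlgebraicClosure k) ∈ IntermediateField.adjoin k {α} →
          ∃ ρ : R, ∀ Q : Ideal (IntClosure R k), Q.IsPrime → LiesOver R k p Q →
            VNonneg R k Q (algebraMap k (AlgebraicClosure k) c) → VNonneg R k Q α →
            VPos R k Q (algebraMap k (AlgebraicClosure k) c - α) →
            x - algebraMap R (IntClosure R k) ρ ∈ Q :=
        fun c x hx => lemA p α r₁ u₁ s₁ hr₁p hu₁p hs₁p hki₁ hγ₁ heq₁ x hx c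
      have lem2 : ∀ (c : k) (x : IntClosure R k),
          (x : AlgebraicClosure k) ∈ IntermediateField.adjoin k {α⁻¹} →
          ∃ ρ : R, ∀ Q : Ideal (IntClosure R k), Q.IsPrime → LiesOver R k p Q →
            VNonneg R k Q (algebraMap k (AlgebraicClosure k) c) → VNonneg R k Q α⁻¹ →
            VPos R k Q (algebraMap k (AlgebraicClosure k) c - α⁻¹) →
            x - algebraMap R (IntClosure R k) ρ ∈ Q :=
        fun c x hx => lemA p α⁻¹ r₂ u₂ s₂ hr₂p hu₂p hs₂p hki₂ hγ₂ heq₂ x hx c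
      constructor
      · -- existence
        refine ⟨Q₀, hQ₀, hpQ₀, ?_, hM₀⟩
        intro x hx
        rcases norm_meets t₀ α hM₀ with ⟨e, ht₀, hB1⟩ | ⟨hα0, c, hcd, hB2⟩
        · obtain ⟨ρ, hρ⟩ := lem1 e x hx
          exact ⟨ρ, hρ Q₀ hQ₀ hpQ₀ hB1.1 hB1.2.1 hB1.2.2⟩
        · obtain ⟨ρ, hρ⟩ := lem2 c x (adjoin_inv α ▸ hx)
          exact ⟨ρ, hρ Q₀ hQ₀ hpQ₀ hB2.1 hB2.2.1 hB2.2.2⟩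
      · -- uniqueness
        rintro Q₁ Q₂ ⟨hQ₁, hpQ₁, -, hM₁⟩ ⟨hQ₂, hpQ₂, -, hM₂⟩ x hx
        suffices hsuf : ∃ ρ : R, x - algebraMap R (IntClosure R k) ρ ∈ Q₁ ∧
            x - algebraMap R (IntClosure R k) ρ ∈ Q₂ by
          obtain ⟨ρ, hρ₁, hρ₂⟩ := hsuf
          have key : ∀ Q : Ideal (IntClosure R k), x - algebraMap R (IntClosure R k) ρ ∈ Q →
              LiesOver R k p Q → (x ∈ Q ↔ ρ ∈ p.asIdeal) := by
            intro Q hsub hpQ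
            constructor
            · intro hxQ
              have h5 := Q.sub_mem hxQ hsub
              simp only [sub_sub_cancel] at h5
              exact (hpQ ρ).mp h5
            · intro hρp
              have h5 := Q.add_mem hsub ((hpQ ρ).mpr hρp)
              simpa using h5
          rw [key Q₁ hρ₁ hpQ₁, key Q₂ hρ₂ hpQ₂]
        -- mixed-case converter: from B1 data at QA and B2 data at QB, get B1 data at QB
        have hmix : ∀ (QA QB : Ideal (IntClosure R k)), QA.IsPrime → LiesOver R k p QA →
            QB.IsPrime → LiesOver R k p QB → α ≠ 0 → ∀ e : k, e ≠ 0 →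
            VNonneg R k QA (algebraMap k (AlgebraicClosure k) e) →
            VNonneg R k QB (algebraMap k (AlgebraicClosure k) e⁻¹) →
            VNonneg R k QB α⁻¹ →
            VPos R k QB (algebraMap k (AlgebraicClosure k) e⁻¹ - α⁻¹) →
            VNonneg R k QB (algebraMap k (AlgebraicClosure k) e) ∧ VNonneg R k QB α ∧
              VPos R k QB (algebraMap k (AlgebraicClosure k) e - α) := by
          intro QA QB hQA hpQA hQB hpQB hα0 e he0 hA hBinv hBαinv hBpos
          obtain ⟨τ, σ, hσ, hτeq⟩ := rep_of_vnonneg hQA hpQA hA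
          obtain ⟨τ', σ', hσ', hτ'eq⟩ := rep_of_vnonneg hQB hpQB hBinv
          have hτp : τ ∉ p.asIdeal := by
            intro hτ
            have h6 : algebraMap R k σ * e * (algebraMap R k σ' * e⁻¹)
                = algebraMap R k τ * algebraMap R k τ' := by rw [hτeq, hτ'eq]
            have h7 : e * e⁻¹ = 1 := mul_inv_cancel₀ he0
            have hkeq : algebraMap R k (σ * σ') = algebraMap R k (τ * τ') := by
              push_cast [map_mul]
              linear_combination h6 - (algebraMap R k σ * algebraMap R k σ') * h7
            have h8 : σ * σ' = τ * τ' := IsFractionRing.injective R k hkeq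
            have h9 : σ * σ' ∈ p.asIdeal := h8 ▸ Ideal.mul_mem_right _ _ hτ
            rcases p.isPrime.mem_or_mem h9 with h | h
            exacts [hσ h, hσ' h]
          have hconv := convert_B2_to_B1 hQB hpQB hα0 hτp hσ hτeq hBαinv hBpos
          exact ⟨vnonneg_of_rep hQB hpQB hσ hτeq, hconv.1, hconv.2⟩
        rcases norm_meets t₀ α hM₁ with ⟨e, ht₀, hB1⟩ | ⟨hα0, c, hcd, hB2⟩ <;>
          rcases norm_meets t₀ α hM₂ with ⟨e', ht₀', hB1'⟩ | ⟨hα0', c', hcd', hB2'⟩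
        · -- B1, B1
          rw [ht₀] at ht₀'
          injection ht₀' with hee
          subst hee
          obtain ⟨ρ, hρ⟩ := lem1 e x hx
          exact ⟨ρ, hρ Q₁ hQ₁ hpQ₁ hB1.1 hB1.2.1 hB1.2.2,
            hρ Q₂ hQ₂ hpQ₂ hB1'.1 hB1'.2.1 hB1'.2.2⟩
        · -- B1 at Q₁, B2 at Q₂
          rcases hcd' with ⟨ht₀n, -⟩ | ⟨e'', ht₀'', he''0, hc'⟩
          · rw [ht₀] at ht₀n; exact absurd ht₀n (by simp)
          · rw [ht₀] at ht₀''
            injection ht₀'' with hee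
            subst hee
            subst hc'
            have h10 := hmix Q₁ Q₂ hQ₁ hpQ₁ hQ₂ hpQ₂ hα0' e he''0 hB1.1 hB2'.1 hB2'.2.1 hB2'.2.2
            obtain ⟨ρ, hρ⟩ := lem1 e x hx
            exact ⟨ρ, hρ Q₁ hQ₁ hpQ₁ hB1.1 hB1.2.1 hB1.2.2,
              hρ Q₂ hQ₂ hpQ₂ h10.1 h10.2.1 h10.2.2⟩
        · -- B2 at Q₁, B1 at Q₂
          rcases hcd with ⟨ht₀n, -⟩ | ⟨e'', ht₀'', he''0, hc'⟩
          · rw [ht₀'] at ht₀n; exact absurd ht₀n (by simp)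
          · rw [ht₀'] at ht₀''
            injection ht₀'' with hee
            subst hee
            subst hc'
            have h10 := hmix Q₂ Q₁ hQ₂ hpQ₂ hQ₁ hpQ₁ hα0 e' he''0 hB1'.1 hB2.1 hB2.2.1 hB2.2.2
            obtain ⟨ρ, hρ⟩ := lem1 e' x hx
            exact ⟨ρ, hρ Q₁ hQ₁ hpQ₁ h10.1 h10.2.1 h10.2.2,
              hρ Q₂ hQ₂ hpQ₂ hB1'.1 hB1'.2.1 hB1'.2.2⟩
        · -- B2, B2
          have hcc : c' = c := by
            rcases hcd with ⟨ht₀n, hc0⟩ | ⟨e1, ht₀1, he10, hc1⟩ <;>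
              rcases hcd' with ⟨ht₀n', hc0'⟩ | ⟨e2, ht₀2, he20, hc2⟩
            · rw [hc0, hc0']
            · rw [ht₀n] at ht₀2; exact absurd ht₀2.symm (by simp)
            · rw [ht₀n'] at ht₀1; exact absurd ht₀1.symm (by simp)
            · rw [ht₀1] at ht₀2
              injection ht₀2 with hee
              rw [hc1, hc2, hee]
          subst hcc
          obtain ⟨ρ, hρ⟩ := lem2 c' x (adjoin_inv α ▸ hx)
          exact ⟨ρ, hρ Q₁ hQ₁ hpQ₁ hB2.1 hB2.2.1 hB2.2.2,
            hρ Q₂ hQ₂ hpQ₂ hB2'.1 hB2'.2.1 hB2'.2.2⟩
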